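/- arXiv:1910.04109 — 3 statements merged into one kernel-verified Lean document; each statement's English description precedes it below -/
import Mathlib

section
/- Let ρ be a probability measure on ℝ, and for a ∈ {0, 1} let κM(a) : ℝ → Measure ℝ and κL(a) : ℝ × ℝ → Measure ℝ be families of probability measures (Markov kernels) such that for all x, m: ∫ m' dκM(a)(x)(m') = θm0 + θma·a + θmx·x and ∫ l dκL(a)(x, m)(l) = θl0 + θla·a + θlm·m + θlx·x. Define the outcome regression μ(x, a, m, l) = θy0 + θyx·x + θya·a + θym·m + θyl·l. Assume x ↦ x is ρ-integrable, that for ρ-almost-every x the functions m ↦ m and m ↦ ∫ l dκL(0)(x, m)(l) are κM(a)(x)-integrable for a ∈ {0,1}, and that all iterated integrals below are well defined (the integrands are integrable at each stage). Then ∫ (∫ (∫ μ(x, 1, m, l) dκL(0)(x, m)(l)) dκM(1)(x)(m)) dρ(x) − ∫ (∫ (∫ μ(x, 0, m, l) dκL(0)(x, m)(l)) dκM(0)(x)(m)) dρ(x) = θya + θym·θma + θyl·θlm·θma. -/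
open MeasureTheory

/-- Closed form of the path-specific effect under a linear structural equation
model.  `ρ` is the distribution of the baseline covariate `X`; `κM a x` is the
distribution of the mediator `M` given `A = a, X = x`, with conditional mean
`θm0 + θma·a + θmx·x`; `κL a (x, m)` is the distribution of the mediator `L`
given `A = a, X = x, M = m`, with conditional mean
`θl0 + θla·a + θlm·m + θlx·x`; and the outcome regression is
`μ x a m l = θy0 + θyx·x + θya·a + θym·m + θyl·l`.  The edge g-formula contrast
identifying the PSE of `A` on `Y` along the direct path and the paths through
`M` equals `θya + θym·θma + θyl·θlm·θma`. -/
theorem pse_linear_sem_closed_form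
    (θm0 θma θmx θl0 θla θlm θlx θy0 θyx θya θym θyl : ℝ)
    (ρ : Measure ℝ) [IsProbabilityMeasure ρ]
    (κM : Bool → ℝ → Measure ℝ) (hκM : ∀ a x, IsProbabilityMeasure (κM a x))
    (κL : Bool → ℝ × ℝ → Measure ℝ) (hκL : ∀ a xm, IsProbabilityMeasure (κL a xm))
    -- conditional mean of M given A = a, X = x
    (hMeanM : ∀ (a : Bool) (x : ℝ),
      ∫ m', m' ∂(κM a x) = θm0 + θma * (if a then (1 : ℝ) else 0) + θmx * x)
    -- conditional mean of L given A = a, X = x, M = m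
    (hMeanL : ∀ (a : Bool) (x m : ℝ),
      ∫ l, l ∂(κL a (x, m)) = θl0 + θla * (if a then (1 : ℝ) else 0) + θlm * m + θlx * x)
    -- outcome regression
    (μ : ℝ → Bool → ℝ → ℝ → ℝ)
    (hμ : ∀ (x : ℝ) (a : Bool) (m l : ℝ),
      μ x a m l = θy0 + θyx * x + θya * (if a then (1 : ℝ) else 0) + θym * m + θyl * l)
    -- `x ↦ x` is `ρ`-integrable
    (hIntρ : Integrable (fun x : ℝ => x) ρ)
    -- for ρ-a.e. x, the functions `m ↦ m` and `m ↦ ∫ l ∂κL 0 (x, m)` are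
    -- `κM a x`-integrable
    (hIntM : ∀ a : Bool, ∀ᵐ x ∂ρ,
      Integrable (fun m : ℝ => m) (κM a x) ∧
      Integrable (fun m : ℝ => ∫ l, l ∂(κL false (x, m))) (κM a x))
    -- the iterated integrals are well defined: the integrands are integrable
    -- at each stage
    (hIntL' : ∀ (a : Bool) (x m : ℝ),
      Integrable (fun l => μ x a m l) (κL false (x, m)))
    (hIntM' : ∀ (a : Bool) (x : ℝ),
      Integrable (fun m => ∫ l, μ x a m l ∂(κL false (x, m))) (κM a x))
    (hIntX' : ∀ a : Bool,
      Integrable (fun x => ∫ m, (∫ l, μ x a m l ∂(κL false (x, m))) ∂(κM a x)) ρ) :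
    (∫ x, (∫ m, (∫ l, μ x true m l ∂(κL false (x, m))) ∂(κM true x)) ∂ρ)
      - (∫ x, (∫ m, (∫ l, μ x false m l ∂(κL false (x, m))) ∂(κM false x)) ∂ρ)
      = θya + θym * θma + θyl * θlm * θma := by
  have hL : ∀ (a : Bool) (x m : ℝ),
      ∫ l, μ x a m l ∂(κL false (x, m))
        = (θy0 + θyx * x + θya * (if a then (1:ℝ) else 0) + θym * m)
          + θyl * (θl0 + θlm * m + θlx * x) := by
    intro a x m
    haveI := hκL false (x, m)
    have hIl : Integrable (fun l => θyl * l) (κL false (x, m)) := by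
      have h := (hIntL' a x m).sub (integrable_const
        (θy0 + θyx * x + θya * (if a then (1:ℝ) else 0) + θym * m))
      refine h.congr (Filter.Eventually.of_forall fun l => ?_)
      simp only [Pi.sub_apply, hμ]
      ring
    simp_rw [hμ]
    rw [show (fun l => θy0 + θyx * x + θya * (if a then (1:ℝ) else 0) + θym * m + θyl * l)
        = (fun l : ℝ => (θy0 + θyx * x + θya * (if a then (1:ℝ) else 0) + θym * m) + θyl * l)
        from rfl]
    rw [integral_add (integrable_const _) hIl, integral_const, integral_const_mul,
      hMeanL false x m]
    simp only [measure_univ, probReal_univ, ENNReal.toReal_one, smul_eq_mul, one_mul, one_smul,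
      Bool.false_eq_true, if_false, mul_zero, add_zero]
  -- key computation for each arm
  have key : ∀ a : Bool,
      ∫ x, (∫ m, (∫ l, μ x a m l ∂(κL false (x, m))) ∂(κM a x)) ∂ρ
        = (θy0 + θya * (if a then (1:ℝ) else 0) + θyl * θl0
            + (θym + θyl * θlm) * (θm0 + θma * (if a then (1:ℝ) else 0)))
          + (θyx + θyl * θlx + (θym + θyl * θlm) * θmx) * ∫ x, x ∂ρ := by
    intro a
    have hae : ∀ᵐ x ∂ρ,
        (∫ m, (∫ l, μ x a m l ∂(κL false (x, m))) ∂(κM a x))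
          = (θy0 + θya * (if a then (1:ℝ) else 0) + θyl * θl0
              + (θym + θyl * θlm) * (θm0 + θma * (if a then (1:ℝ) else 0)))
            + (θyx + θyl * θlx + (θym + θyl * θlm) * θmx) * x := by
      filter_upwards [hIntM a] with x hx
      haveI := hκM a x
      have hIm : Integrable (fun m => (θym + θyl * θlm) * m) (κM a x) :=
        hx.1.const_mul _
      have : (fun m => ∫ l, μ x a m l ∂(κL false (x, m)))
          = fun m => (θy0 + θyx * x + θya * (if a then (1:ℝ) else 0)
              + θyl * (θl0 + θlx * x)) + (θym + θyl * θlm) * m := by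
        funext m; rw [hL a x m]; ring
      rw [this, integral_add (integrable_const _) hIm, integral_const,
        integral_const_mul, hMeanM a x]
      simp only [measure_univ, probReal_univ, ENNReal.toReal_one, smul_eq_mul, one_mul, one_smul]
      ring
    rw [integral_congr_ae hae,
      integral_add (integrable_const _) (hIntρ.const_mul _),
      integral_const, integral_const_mul]
    simp only [measure_univ, probReal_univ, ENNReal.toReal_one, smul_eq_mul, one_mul, one_smul]
  rw [key true, key false]
  simp only [if_pos, if_neg, Bool.false_eq_true, not_false_iff, ite_true, ite_false]
  ring
end

section
/- Let n be a positive natural number, m : Fin n → ℝ, and λ ∈ ℝ such that 1 + λ·m(i) > 0 for all i and ∑_{i} m(i)/(1 + λ·m(i)) = 0, and set p(i) = 1/(n·(1 + λ·m(i))). Then for every q : Fin n → ℝ with q(i) > 0 for all i, ∑_{i} q(i) = 1, and ∑_{i} q(i)·m(i) = 0, one has ∑_{i} log q(i) ≤ ∑_{i} log p(i). That is, the weights p(i) maximize the empirical log-likelihood ∑_i log p_i over all strictly positive probability vectors satisfying the moment constraint ∑_i p_i·m(i) = 0. -/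
open Finset

/-- Optimality of the Lagrange-multiplier solution of the profile empirical
likelihood problem: the weights `p i = 1 / (n·(1 + λ·m i))`, with `λ` solving
`∑ i, m i / (1 + λ·m i) = 0`, maximize the empirical log-likelihood
`∑ i, log p i` over all strictly positive probability vectors `q` satisfying
the moment constraint `∑ i, q i · m i = 0`. -/
theorem empirical_likelihood_weights_optimal
    (n : ℕ) (hn : 0 < n) (m : Fin n → ℝ) (lam : ℝ)
    (hpos : ∀ i, 0 < 1 + lam * m i)
    (hroot : ∑ i, m i / (1 + lam * m i) = 0)
    (p : Fin n → ℝ) (hp : ∀ i, p i = 1 / (n * (1 + lam * m i))) :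
    ∀ q : Fin n → ℝ, (∀ i, 0 < q i) → (∑ i, q i = 1) → (∑ i, q i * m i = 0) →
      ∑ i, Real.log (q i) ≤ ∑ i, Real.log (p i) := by
  intro q hq hq1 hqm
  have hn' : (0 : ℝ) < n := by exact_mod_cast hn
  have hppos : ∀ i, 0 < p i := by
    intro i
    rw [hp i]
    have := hpos i
    positivity
  have key : ∀ i, Real.log (q i) - Real.log (p i) ≤ q i / p i - 1 := by
    intro i
    have h1 : Real.log (q i / p i) ≤ q i / p i - 1 :=
      Real.log_le_sub_one_of_pos (div_pos (hq i) (hppos i))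
    rwa [Real.log_div (ne_of_gt (hq i)) (ne_of_gt (hppos i))] at h1
  have hsum : ∑ i, (q i / p i - 1) = 0 := by
    have : ∀ i, q i / p i - 1 = (n : ℝ) * q i + (n : ℝ) * lam * (q i * m i) - 1 := by
      intro i
      rw [hp i]
      have h := (hpos i).ne'
      field_simp
    rw [Finset.sum_congr rfl fun i _ => this i]
    simp [Finset.sum_sub_distrib, ← Finset.mul_sum, hq1, hqm,
      Finset.sum_add_distrib]
  have h2 : ∑ i, (Real.log (q i) - Real.log (p i)) ≤ ∑ i, (q i / p i - 1) :=
    Finset.sum_le_sum (fun i _ => key i)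
  rw [hsum, Finset.sum_sub_distrib] at h2
  linarith
end

section
/- Let n be a positive natural number and m : Fin n → ℝ such that m(i) > 0 for some i and m(j) < 0 for some j. Then there exists a unique λ ∈ ℝ such that 1 + λ·m(i) > 0 for all i and ∑_{i} m(i)/(1 + λ·m(i)) = 0. -/
open Finset

set_option maxHeartbeats 1000000

/-- Strict monotonicity of the multiplier equation in `λ`. -/
lemma el_sum_strict_anti (n : ℕ) (m : Fin n → ℝ) (hposval : ∃ i, 0 < m i)
    (a b : ℝ) (hab : a < b) (ha : ∀ i, 0 < 1 + a * m i) (hb : ∀ i, 0 < 1 + b * m i) :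
      ∑ i, m i / (1 + b * m i) < ∑ i, m i / (1 + a * m i) := by
  obtain ⟨i0, hi0⟩ := hposval
  apply Finset.sum_lt_sum
  · intro i _
    rcases lt_trichotomy (m i) 0 with h | h | h
    · rw [div_le_div_iff₀ (hb i) (ha i)]
      nlinarith [mul_le_mul_of_nonneg_right hab.le (mul_self_nonneg (m i))]
    · simp [h]
    · refine le_of_lt ?_
      rw [div_lt_div_iff₀ (hb i) (ha i)]
      nlinarith [mul_lt_mul_of_pos_right hab (mul_pos h h)]
  · exact ⟨i0, Finset.mem_univ i0, by
      rw [div_lt_div_iff₀ (hb i0) (ha i0)]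
      nlinarith [mul_lt_mul_of_pos_right hab (mul_pos hi0 hi0)]⟩

/-- Existence and uniqueness of the Lagrange multiplier in the profile
empirical likelihood solution: if the estimating-function values `m i` take
both positive and negative values, there is exactly one `λ` with all
denominators `1 + λ·m i` strictly positive and
`∑ i, m i / (1 + λ·m i) = 0`. -/
theorem empirical_likelihood_multiplier_exists_unique
    (n : ℕ) (hn : 0 < n) (m : Fin n → ℝ)
    (hposval : ∃ i, 0 < m i) (hnegval : ∃ j, m j < 0) :
    ∃! lam : ℝ, (∀ i, 0 < 1 + lam * m i) ∧ ∑ i, m i / (1 + lam * m i) = 0 := by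
  obtain ⟨ip, hip⟩ := hposval
  obtain ⟨jn, hjn⟩ := hnegval
  obtain ⟨i0, -, hi0max⟩ := Finset.exists_max_image Finset.univ m ⟨ip, Finset.mem_univ ip⟩
  obtain ⟨j0, -, hj0min⟩ := Finset.exists_min_image Finset.univ m ⟨ip, Finset.mem_univ ip⟩
  have hi0max : ∀ i, m i ≤ m i0 := fun i => hi0max i (Finset.mem_univ i)
  have hj0min : ∀ i, m j0 ≤ m i := fun i => hj0min i (Finset.mem_univ i)
  set M := m i0 with hM
  set μ := m j0 with hμ
  have hMpos : 0 < M := lt_of_lt_of_le hip (hi0max ip)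
  have hμneg : μ < 0 := lt_of_le_of_lt (hj0min jn) hjn
  set C := ∑ i, |m i| with hC
  have hC0 : 0 ≤ C := Finset.sum_nonneg fun i _ => abs_nonneg _
  set ε1 := min (1/2 : ℝ) (M / (C + 1)) with hε1
  have hε1pos : 0 < ε1 := lt_min (by norm_num) (div_pos hMpos (by linarith))
  have hε1le : ε1 ≤ 1/2 := min_le_left _ _
  set a := (ε1 - 1) / M with ha_def
  have haneg : a < 0 := div_neg_of_neg_of_pos (by linarith) hMpos
  have haM : a * M = ε1 - 1 := div_mul_cancel₀ _ (ne_of_gt hMpos)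
  set ε2 := min (1/2 : ℝ) ((-μ) / (C + 1)) with hε2
  have hε2pos : 0 < ε2 := lt_min (by norm_num) (div_pos (by linarith) (by linarith))
  have hε2le : ε2 ≤ 1/2 := min_le_left _ _
  set b := (1 - ε2) / (-μ) with hb_def
  have hbpos : 0 < b := div_pos (by linarith) (by linarith)
  have hbμ : b * μ = -(1 - ε2) := by
    rw [hb_def]
    field_simp
    rw [mul_div_assoc, div_self (ne_of_lt hμneg)]
    ring
  have hab : a < b := lt_trans haneg hbpos
  -- denominators positive at a
  have hden_a : ∀ i, 0 < 1 + a * m i := by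
    intro i
    rcases le_or_gt (m i) 0 with h | h
    · nlinarith
    · have : a * M ≤ a * m i := by
        nlinarith [hi0max i]
      nlinarith
  -- denominators positive at b
  have hden_b : ∀ i, 0 < 1 + b * m i := by
    intro i
    rcases le_or_gt 0 (m i) with h | h
    · nlinarith
    · have : b * μ ≤ b * m i := by nlinarith [hj0min i]
      nlinarith
  -- denominators positive on the whole interval
  have hden : ∀ x ∈ Set.Icc a b, ∀ i, 0 < 1 + x * m i := by
    intro x hx i
    obtain ⟨hx1, hx2⟩ := hx
    rcases le_or_gt 0 (m i) with h | h
    · nlinarith [hden_a i]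
    · nlinarith [hden_b i]
  set f : ℝ → ℝ := fun x => ∑ i, m i / (1 + x * m i) with hf
  -- f a ≥ 1
  have hfa : 1 ≤ f a := by
    have hfa_eq : f a = m i0 / (1 + a * m i0) + ∑ i ∈ Finset.univ.erase i0, m i / (1 + a * m i) :=
      (Finset.add_sum_erase _ _ (Finset.mem_univ i0)).symm
    have hden_i0 : 1 + a * m i0 = ε1 := by rw [← hM, haM]; ring
    have hterm0 : C + 1 ≤ m i0 / (1 + a * m i0) := by
      rw [hden_i0, le_div_iff₀ hε1pos, ← hM]
      have : ε1 ≤ M / (C + 1) := min_le_right _ _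
      rw [le_div_iff₀ (by linarith : (0:ℝ) < C + 1)] at this
      linarith
    have hrest : -C ≤ ∑ i ∈ Finset.univ.erase i0, m i / (1 + a * m i) := by
      have h1 : ∀ i ∈ Finset.univ.erase i0, -|m i| ≤ m i / (1 + a * m i) := by
        intro i _
        rcases le_or_gt 0 (m i) with h | h
        · have := div_nonneg h (hden_a i).le
          have := abs_nonneg (m i)
          linarith
        · rw [abs_of_neg h, neg_neg, le_div_iff₀ (hden_a i)]
          nlinarith [mul_nonpos_of_nonpos_of_nonneg haneg.le (mul_self_nonneg (m i))]
      have h2 : ∑ i ∈ Finset.univ.erase i0, |m i| ≤ C :=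
        Finset.sum_le_sum_of_subset_of_nonneg (Finset.erase_subset _ _)
          (fun i _ _ => abs_nonneg _)
      have h3 : ∑ i ∈ Finset.univ.erase i0, (-|m i|) = -∑ i ∈ Finset.univ.erase i0, |m i| :=
        Finset.sum_neg_distrib _
      have h4 := Finset.sum_le_sum h1
      linarith
    rw [hfa_eq]; linarith
  -- f b ≤ -1
  have hfb : f b ≤ -1 := by
    have hfb_eq : f b = m j0 / (1 + b * m j0) + ∑ i ∈ Finset.univ.erase j0, m i / (1 + b * m i) :=
      (Finset.add_sum_erase _ _ (Finset.mem_univ j0)).symm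
    have hden_j0 : 1 + b * m j0 = ε2 := by rw [← hμ, hbμ]; ring
    have hterm0 : m j0 / (1 + b * m j0) ≤ -(C + 1) := by
      rw [hden_j0, div_le_iff₀ hε2pos, ← hμ]
      have : ε2 ≤ (-μ) / (C + 1) := min_le_right _ _
      rw [le_div_iff₀ (by linarith : (0:ℝ) < C + 1)] at this
      nlinarith
    have hrest : ∑ i ∈ Finset.univ.erase j0, m i / (1 + b * m i) ≤ C := by
      have h1 : ∀ i ∈ Finset.univ.erase j0, m i / (1 + b * m i) ≤ |m i| := by
        intro i _
        rcases le_or_gt (m i) 0 with h | h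
        · have := div_nonpos_of_nonpos_of_nonneg h (hden_b i).le
          have := abs_nonneg (m i)
          linarith
        · rw [abs_of_pos h, div_le_iff₀ (hden_b i)]
          nlinarith [mul_nonneg hbpos.le (mul_self_nonneg (m i))]
      calc ∑ i ∈ Finset.univ.erase j0, m i / (1 + b * m i)
            ≤ ∑ i ∈ Finset.univ.erase j0, |m i| := Finset.sum_le_sum h1
        _ ≤ C := Finset.sum_le_sum_of_subset_of_nonneg (Finset.erase_subset _ _)
              (fun i _ _ => abs_nonneg _)
    rw [hfb_eq]; linarith
  -- continuity
  have hcont : ContinuousOn f (Set.Icc a b) := by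
    apply continuousOn_finset_sum
    intro i _
    exact ContinuousOn.div continuousOn_const
      ((continuous_const.add (continuous_id.mul continuous_const)).continuousOn)
      (fun x hx => ne_of_gt (hden x hx i))
  -- IVT
  have h0mem : (0:ℝ) ∈ Set.Icc (f b) (f a) := ⟨by linarith, by linarith⟩
  obtain ⟨lam, hlam_mem, hlam_eq⟩ := intermediate_value_Icc' hab.le hcont h0mem
  have hlam0 : ∑ i, m i / (1 + lam * m i) = 0 := hlam_eq
  refine ⟨lam, ⟨fun i => hden lam hlam_mem i, hlam0⟩, ?_⟩
  intro y ⟨hy1, hy2⟩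
  by_contra hne
  rcases lt_or_gt_of_ne hne with h | h
  · have := el_sum_strict_anti n m ⟨ip, hip⟩ y lam h hy1 (fun i => hden lam hlam_mem i)
    rw [hy2, hlam0] at this; exact lt_irrefl 0 this
  · have := el_sum_strict_anti n m ⟨ip, hip⟩ lam y h (fun i => hden lam hlam_mem i) hy1
    rw [hy2, hlam0] at this; exact lt_irrefl 0 this
end
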